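/- Let D ⊂ ℂⁿ be a bounded convex open set with Kobayashi distance k_D (which is a complete distance whose bounded subsets are relatively compact in D, and which satisfies k_D(s z₁ + (1-s)w₁, s z₂ + (1-s)w₂) ≤ max(k_D(z₁,z₂), k_D(w₁,w₂)) for s ∈ [0,1]). Let x, y ∈ ∂D and let {z_ν}, {w_ν} ⊂ D be sequences converging to x and y respectively with sup_ν k_D(z_ν, w_ν) < +∞. Then the closed segment [x,y] is contained in ∂D. -/

import Mathlib

open Filter Topology Metric

/-- Let `D ⊆ ℂⁿ` be a bounded convex open set and `k` a distance on `D`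
(e.g. the Kobayashi distance) such that `k`-bounded subsets of `D` are
relatively compact in `D` and such that `k` satisfies the convexity estimate
`k(s z₁+(1-s)w₁, s z₂+(1-s)w₂) ≤ max (k z₁ z₂) (k w₁ w₂)`.  If `zs`, `ws` are
sequences in `D` converging to boundary points `x`, `y`, with
`sup_ν k (zs ν) (ws ν) < ∞`, then the closed segment `[x,y]` is contained in
`∂D`. -/
theorem segment_subset_frontier_of_bounded_kobayashi {n : ℕ}
    {D : Set (Fin n → ℂ)} (hconv : Convex ℝ D) (hopen : IsOpen D)
    (hbd : Bornology.IsBounded D)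
    (k : (Fin n → ℂ) → (Fin n → ℂ) → ℝ)
    -- `k` is a distance on `D`:
    (hk_nonneg : ∀ z ∈ D, ∀ w ∈ D, 0 ≤ k z w)
    (hk_eq_zero : ∀ z ∈ D, ∀ w ∈ D, (k z w = 0 ↔ z = w))
    (hk_symm : ∀ z ∈ D, ∀ w ∈ D, k z w = k w z)
    (hk_triangle : ∀ z ∈ D, ∀ w ∈ D, ∀ u ∈ D, k z u ≤ k z w + k w u)
    -- (a) `k`-bounded subsets of `D` are relatively compact in `D`:
    (hk_proper : ∀ S ⊆ D, (∃ z₀ ∈ D, ∃ c : ℝ, ∀ z ∈ S, k z₀ z ≤ c) →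
      IsCompact (closure S) ∧ closure S ⊆ D)
    -- (b) convexity estimate:
    (hk_convex : ∀ z₁ ∈ D, ∀ z₂ ∈ D, ∀ w₁ ∈ D, ∀ w₂ ∈ D, ∀ s ∈ Set.Icc (0:ℝ) 1,
      k (s • z₁ + (1 - s) • w₁) (s • z₂ + (1 - s) • w₂) ≤ max (k z₁ z₂) (k w₁ w₂))
    {x y : Fin n → ℂ} (hx : x ∈ frontier D) (hy : y ∈ frontier D)
    {zs ws : ℕ → Fin n → ℂ} (hzs : ∀ ν, zs ν ∈ D) (hws : ∀ ν, ws ν ∈ D)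
    (hzx : Filter.Tendsto zs Filter.atTop (nhds x))
    (hwy : Filter.Tendsto ws Filter.atTop (nhds y))
    {c : ℝ} (hc : ∀ ν, k (zs ν) (ws ν) ≤ c) :
    segment ℝ x y ⊆ frontier D := by
  have hcnonneg : (0:ℝ) ≤ c := le_trans (hk_nonneg _ (hzs 0) _ (hws 0)) (hc 0)
  have hxD : x ∉ D := by
    rw [hopen.frontier_eq] at hx; exact hx.2
  have hxcl : x ∈ closure D := frontier_subset_closure hx
  have hycl : y ∈ closure D := frontier_subset_closure hy
  intro p hp
  have hpcl : p ∈ closure D := hconv.closure.segment_subset hxcl hycl hp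
  rw [hopen.frontier_eq]
  refine ⟨hpcl, fun hpD => hxD ?_⟩
  -- From `p ∈ D` we derive the contradiction `x ∈ D`.
  obtain ⟨a, b, ha, hb, hab, hpab⟩ := hp
  have hb' : b = 1 - a := by linarith
  set σ : ℕ → Fin n → ℂ := fun ν => a • zs ν + b • ws ν with hσdef
  have hσD : ∀ ν, σ ν ∈ D := fun ν => hconv (hzs ν) (hws ν) ha hb hab
  have hσp : Tendsto σ atTop (𝓝 p) := by
    rw [← hpab]
    exact (hzx.const_smul a).add (hwy.const_smul b)
  -- the points σ ν stay within k-distance c of zs ν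
  have hσz : ∀ ν, k (σ ν) (zs ν) ≤ c := by
    intro ν
    have h := hk_convex (zs ν) (hzs ν) (zs ν) (hzs ν) (ws ν) (hws ν) (zs ν) (hzs ν)
      a ⟨ha, by linarith⟩
    have heq : a • zs ν + (1 - a) • zs ν = zs ν := by
      rw [← add_smul]; ring_nf; rw [one_smul]
    rw [heq] at h
    have h0 : k (zs ν) (zs ν) = 0 := (hk_eq_zero _ (hzs ν) _ (hzs ν)).mpr rfl
    have hwz : k (ws ν) (zs ν) ≤ c := by
      rw [hk_symm _ (hws ν) _ (hzs ν)]; exact hc ν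
    calc k (σ ν) (zs ν) = k (a • zs ν + (1 - a) • ws ν) (zs ν) := by rw [hσdef, hb']
      _ ≤ max (k (zs ν) (zs ν)) (k (ws ν) (zs ν)) := h
      _ ≤ c := max_le (by rw [h0]; exact hcnonneg) hwz
  obtain ⟨ε, hε, hball⟩ := Metric.isOpen_iff.mp hopen p hpD
  -- choose good indices
  have hchoice : ∀ j : ℕ, ∃ ν, dist (σ ν) p < ε / (j + 1) ∧ dist (zs ν) x < 1 / (j + 1) := by
    intro j
    obtain ⟨N1, hN1⟩ := Metric.tendsto_atTop.mp hσp (ε / (j + 1)) (by positivity)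
    obtain ⟨N2, hN2⟩ := Metric.tendsto_atTop.mp hzx (1 / (j + 1)) (by positivity)
    exact ⟨max N1 N2, hN1 _ (le_max_left _ _), hN2 _ (le_max_right _ _)⟩
  choose ν hν1 hν2 using hchoice
  set r : ℕ → Fin n → ℂ := fun j => p + (j : ℝ) • (p - σ (ν j)) with hrdef
  set m : ℕ → Fin n → ℂ :=
    fun j => ((j : ℝ) / (j + 1)) • zs (ν j) + (1 / ((j : ℝ) + 1)) • r j with hmdef
  have hj1 : ∀ j : ℕ, ((j : ℝ) + 1) ≠ 0 := fun j => by positivity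
  have hsmem : ∀ j : ℕ, ((j : ℝ) / (j + 1)) ∈ Set.Icc (0:ℝ) 1 := by
    intro j
    constructor
    · positivity
    · rw [div_le_one (by positivity)]; linarith [Nat.cast_nonneg (α := ℝ) j]
  have hrp : ∀ j, dist (r j) p < ε := by
    intro j
    have h1 : dist (r j) p = (j : ℝ) * dist (σ (ν j)) p := by
      rw [hrdef]
      rw [dist_eq_norm]
      simp only [add_sub_cancel_left, norm_smul, Real.norm_natCast]
      rw [norm_sub_rev, ← dist_eq_norm]
    rw [h1]
    calc (j : ℝ) * dist (σ (ν j)) p ≤ (j : ℝ) * (ε / (j + 1)) :=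
          mul_le_mul_of_nonneg_left (le_of_lt (hν1 j)) (Nat.cast_nonneg j)
      _ = ε * ((j : ℝ) / (j + 1)) := by ring
      _ < ε * 1 := by
          apply mul_lt_mul_of_pos_left _ hε
          rw [div_lt_one (by positivity)]; linarith [Nat.cast_nonneg (α := ℝ) j]
      _ = ε := mul_one ε
  have hrD : ∀ j, r j ∈ D := fun j => hball (by simpa [Metric.mem_ball] using hrp j)
  have hmD : ∀ j, m j ∈ D := by
    intro j
    exact hconv (hzs (ν j)) (hrD j) (hsmem j).1 (by positivity)
      (by field_simp)
  -- the key identity: p is the corresponding combination of σ and r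
  have hid : ∀ j : ℕ, ((j : ℝ) / (j + 1)) • σ (ν j) + (1 / ((j : ℝ) + 1)) • r j = p := by
    intro j
    rw [hrdef]
    have h := hj1 j
    match_scalars <;> field_simp <;> ring
  have hkm : ∀ j, k p (m j) ≤ c := by
    intro j
    have h := hk_convex (σ (ν j)) (hσD _) (zs (ν j)) (hzs _) (r j) (hrD j) (r j) (hrD j)
      ((j : ℝ) / (j + 1)) (hsmem j)
    have h1 : (1 : ℝ) - (j : ℝ) / (j + 1) = 1 / ((j : ℝ) + 1) := by field_simp; ring
    rw [h1, hid j] at h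
    have h0 : k (r j) (r j) = 0 := (hk_eq_zero _ (hrD j) _ (hrD j)).mpr rfl
    exact le_trans h (max_le (hσz (ν j)) (by rw [h0]; exact hcnonneg))
  -- m tends to x
  have htend : Tendsto m atTop (𝓝 x) := by
    rw [tendsto_iff_dist_tendsto_zero]
    have hbound : ∀ j, dist (m j) x ≤ (1 + ε + dist p x) * (1 / ((j : ℝ) + 1)) := by
      intro j
      have hxsplit : x = ((j : ℝ) / (j + 1)) • x + (1 / ((j : ℝ) + 1)) • x := by
        rw [← add_smul]
        have : (j : ℝ) / (j + 1) + 1 / ((j : ℝ) + 1) = 1 := by field_simp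
        rw [this, one_smul]
      calc dist (m j) x
          = dist (((j : ℝ) / (j + 1)) • zs (ν j) + (1 / ((j : ℝ) + 1)) • r j)
              (((j : ℝ) / (j + 1)) • x + (1 / ((j : ℝ) + 1)) • x) := by
            rw [hmdef, ← hxsplit]
        _ ≤ dist (((j : ℝ) / (j + 1)) • zs (ν j)) (((j : ℝ) / (j + 1)) • x)
            + dist ((1 / ((j : ℝ) + 1)) • r j) ((1 / ((j : ℝ) + 1)) • x) :=
            dist_add_add_le _ _ _ _
        _ = ((j : ℝ) / (j + 1)) * dist (zs (ν j)) x
            + (1 / ((j : ℝ) + 1)) * dist (r j) x := by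
            rw [dist_smul₀, dist_smul₀, Real.norm_of_nonneg (hsmem j).1,
              Real.norm_of_nonneg (by positivity : (0:ℝ) ≤ 1 / ((j : ℝ) + 1))]
        _ ≤ 1 * (1 / ((j : ℝ) + 1)) + (1 / ((j : ℝ) + 1)) * (ε + dist p x) := by
            gcongr
            · exact (hsmem j).2
            · exact le_of_lt (hν2 j)
            · calc dist (r j) x ≤ dist (r j) p + dist p x := dist_triangle _ _ _
                _ ≤ ε + dist p x := by linarith [hrp j]
        _ = (1 + ε + dist p x) * (1 / ((j : ℝ) + 1)) := by ring
    have hlim : Tendsto (fun j : ℕ => (1 + ε + dist p x) * (1 / ((j : ℝ) + 1)))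
        atTop (𝓝 0) := by
      have := tendsto_one_div_add_atTop_nhds_zero_nat.const_mul (1 + ε + dist p x)
      simpa using this
    exact squeeze_zero (fun j => dist_nonneg) hbound hlim
  obtain ⟨-, hsub⟩ := hk_proper (Set.range m)
    (by rintro _ ⟨j, rfl⟩; exact hmD j)
    ⟨p, hpD, c, by rintro _ ⟨j, rfl⟩; exact hkm j⟩
  exact hsub (mem_closure_of_tendsto htend (Eventually.of_forall fun j => Set.mem_range_self j))
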